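/- Let $k$ be a commutative ring, $M$ a $k$-module with a symplectic bilinear form $\Phi : M \times M \to k$ (i.e., $\Phi(x,x) = 0$ for all $x$), and let $SW(M,\Phi) = T(M)/\langle x \otimes y - y \otimes x - \Phi(x,y)\cdot 1 \rangle$ be the symplectic Weyl algebra with canonical map $i : M \to SW(M,\Phi)$. Then for every $k$-linear functional $u \in \operatorname{Hom}_k(M, k)$ there exists a unique $k$-linear derivation $D_u : SW(M,\Phi) \to SW(M,\Phi)$ such that $D_u(i(x)) = u(x) \cdot 1$ for all $x \in M$. -/

import Mathlib

open TensorAlgebra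

/-- The defining relations of the symplectic Weyl algebra `SW(M,Φ)`:
`ι x * ι y = ι y * ι x + Φ(x,y)·1`. -/
inductive SWRel {k M : Type*} [CommRing k] [AddCommGroup M] [Module k M]
    (Φ : M →ₗ[k] M →ₗ[k] k) : TensorAlgebra k M → TensorAlgebra k M → Prop
  | rel (x y : M) :
      SWRel Φ (ι k x * ι k y) (ι k y * ι k x + algebraMap k (TensorAlgebra k M) (Φ x y))

section Aux

variable {k M : Type*} [CommRing k] [AddCommGroup M] [Module k M]
  (Φ : M →ₗ[k] M →ₗ[k] k) (u : M →ₗ[k] k)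

/-- generator map into dual numbers. -/
noncomputable def swGen :
    M →ₗ[k] TrivSqZeroExt (RingQuot (SWRel Φ)) (RingQuot (SWRel Φ)) where
  toFun x := ⟨RingQuot.mkAlgHom k (SWRel Φ) (ι k x), u x • 1⟩
  map_add' x y := by
    ext
    · simp only [map_add]; rfl
    · simp only [map_add, add_smul]; rfl
  map_smul' c x := by
    ext
    · simp only [map_smul]; rfl
    · simp only [map_smul, smul_assoc]; rfl

theorem swGen_apply (x : M) :
    swGen Φ u x = TrivSqZeroExt.inl (RingQuot.mkAlgHom k (SWRel Φ) (ι k x))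
      + TrivSqZeroExt.inr (u x • 1) := by
  exact (TrivSqZeroExt.inl_fst_add_inr_snd_eq _).symm

/-- The algebra map `SW(M,Φ) → SW(M,Φ)[ε]/(ε²)` induced by `x ↦ i(x) + u(x)ε`. -/
noncomputable def swDual :
    RingQuot (SWRel Φ) →ₐ[k]
      TrivSqZeroExt (RingQuot (SWRel Φ)) (RingQuot (SWRel Φ)) :=
  RingQuot.liftAlgHom k ⟨TensorAlgebra.lift k (swGen Φ u), by
    rintro a b ⟨x, y⟩
    have hrel := RingQuot.mkAlgHom_rel k (SWRel.rel (Φ := Φ) x y)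
    simp only [map_mul, map_add] at hrel ⊢
    simp only [TensorAlgebra.lift_ι_apply]
    ext
    · simpa [swGen_apply, TrivSqZeroExt.algebraMap_eq_inl'] using hrel
    · simp [swGen_apply, TrivSqZeroExt.fst_mk, TrivSqZeroExt.snd_mk, TrivSqZeroExt.snd_mul, TrivSqZeroExt.algebraMap_eq_inl',
        smul_smul, MulOpposite.smul_eq_mul_unop, mul_smul_comm, smul_mul_assoc]
      abel⟩

theorem swDual_mk (x : M) :
    swDual Φ u (RingQuot.mkAlgHom k (SWRel Φ) (ι k x))
      = ⟨RingQuot.mkAlgHom k (SWRel Φ) (ι k x), u x • 1⟩ := by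
  rw [swDual, RingQuot.liftAlgHom_mkAlgHom_apply]
  simp only [AlgHom.coe_mk, TensorAlgebra.lift_ι_apply]
  rfl

theorem swDual_fst (a : RingQuot (SWRel Φ)) : (swDual Φ u a).fst = a := by
  have : (TrivSqZeroExt.fstHom k (RingQuot (SWRel Φ)) (RingQuot (SWRel Φ))).comp
      (swDual Φ u) = AlgHom.id k _ := by
    apply RingQuot.ringQuot_ext'
    apply TensorAlgebra.hom_ext
    ext x
    simp [swDual_mk, TrivSqZeroExt.fst_mk, TrivSqZeroExt.snd_mk]
    rfl
  simpa using DFunLike.congr_fun this a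

end Aux

/-- For every linear functional `u : M → k` there is a unique `k`-linear derivation
`D_u` of the symplectic Weyl algebra `SW(M,Φ)` with `D_u(i(x)) = u(x)·1` for all `x`. -/
theorem stmt13 {k M : Type*} [CommRing k] [AddCommGroup M] [Module k M]
    (Φ : M →ₗ[k] M →ₗ[k] k) (hΦ : ∀ x : M, Φ x x = 0)
    (u : M →ₗ[k] k) :
    ∃! D : RingQuot (SWRel Φ) →ₗ[k] RingQuot (SWRel Φ),
      (∀ a b : RingQuot (SWRel Φ), D (a * b) = D a * b + a * D b) ∧
      (∀ x : M, D (RingQuot.mkAlgHom k (SWRel Φ) (ι k x)) = u x • 1) := by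
  classical
  set A := RingQuot (SWRel Φ)
  refine ⟨{ toFun := fun a => (swDual Φ u a).snd
            map_add' := by intro a b; simp
            map_smul' := by intro c a; simp [map_smul] }, ⟨?_, ?_⟩, ?_⟩
  · intro a b
    simp only [LinearMap.coe_mk, AddHom.coe_mk, map_mul, TrivSqZeroExt.snd_mul,
      swDual_fst]
    rw [smul_eq_mul, MulOpposite.smul_eq_mul_unop, MulOpposite.unop_op]
    abel
  · intro x
    simp [swDual_mk]
  · intro D ⟨hD, hDx⟩
    have hD1 : D 1 = 0 := by
      have := hD 1 1
      simpa using this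
    ext a
    obtain ⟨t, rfl⟩ := RingQuot.mkAlgHom_surjective k (SWRel Φ) a
    induction t using TensorAlgebra.induction with
    | algebraMap r =>
        simp only [AlgHom.commutes]
        rw [Algebra.algebraMap_eq_smul_one, map_smul, map_smul, hD1, smul_zero]
        simp
    | ι x =>
        rw [hDx]
        simp [swDual_mk]
    | mul a b ha hb =>
        rw [map_mul, hD, ha, hb]
        simp only [LinearMap.coe_mk, AddHom.coe_mk, map_mul, TrivSqZeroExt.snd_mul,
          swDual_fst]
        rw [smul_eq_mul, MulOpposite.smul_eq_mul_unop, MulOpposite.unop_op]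
        abel
    | add a b ha hb =>
        rw [map_add, map_add, map_add, ha, hb]
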